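/- If every equivalence class member is a suffix of the longest member, then primary edges form a tree rooted at the source: in the DAWG of S, every state [u] with u ≠ ε has exactly one incoming primary edge, i.e., exactly one pair ([w], a) with w·a ∈ [u] and |longest([w])| + 1 = |longest([u])|. -/

import Mathlib

/-- `endPos S u` is the set of (0-indexed) ending positions `j` of occurrences of `u` in `S`,
i.e. positions `j` such that `u` is a suffix of `S[0..j]`. -/
def endPos {α : Type*} (S u : List α) : Set ℕ := {j | j < S.length ∧ u <:+ S.take (j + 1)}

/-- `w` is either the empty string (the source state) or the longest member of its
end-position equivalence class. -/
def IsLongestRep {α : Type*} (S w : List α) : Prop :=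
  w = [] ∨ (w <:+: S ∧ w ≠ [] ∧
    ∀ v, v <:+: S → v ≠ [] → endPos S v = endPos S w → v.length ≤ w.length)

lemma suffix_snoc_iff {α : Type*} (x l : List α) (a c : α) :
    (x ++ [a]) <:+ (l ++ [c]) ↔ a = c ∧ x <:+ l := by
  constructor
  · rintro ⟨p, hp⟩
    rw [← List.append_assoc] at hp
    obtain ⟨h1, h2⟩ := List.append_inj' hp rfl
    simp at h2
    exact ⟨h2, ⟨p, h1⟩⟩
  · rintro ⟨rfl, p, hp⟩
    exact ⟨p, by rw [← List.append_assoc, hp]⟩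

lemma endPos_snoc_subset {α : Type*} {S x y : List α} (a : α) (hx : x ≠ [])
    (h : endPos S x = endPos S y) : endPos S (x ++ [a]) ⊆ endPos S (y ++ [a]) := by
  rintro j ⟨hj, hsuf⟩
  have hlen := hsuf.length_le
  have hxl : 1 ≤ x.length := List.length_pos_iff.mpr hx
  simp [List.length_take] at hlen
  have hj1 : 1 ≤ j := by omega
  have htake : S.take (j + 1) = S.take j ++ [S[j]] := by
    rw [List.take_succ, List.getElem?_eq_getElem hj]
    rfl
  rw [htake, suffix_snoc_iff] at hsuf
  obtain ⟨ha, hxs⟩ := hsuf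
  have hmem : j - 1 ∈ endPos S x := by
    refine ⟨by omega, ?_⟩
    have : j - 1 + 1 = j := by omega
    rw [this]; exact hxs
  rw [h] at hmem
  obtain ⟨-, hys⟩ := hmem
  have : j - 1 + 1 = j := by omega
  rw [this] at hys
  refine ⟨hj, ?_⟩
  rw [htake, suffix_snoc_iff]
  exact ⟨ha, hys⟩

lemma endPos_snoc {α : Type*} {S x y : List α} (a : α) (hx : x ≠ []) (hy : y ≠ [])
    (h : endPos S x = endPos S y) : endPos S (x ++ [a]) = endPos S (y ++ [a]) :=
  Set.Subset.antisymm (endPos_snoc_subset a hx h) (endPos_snoc_subset a hy h.symm)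

lemma endPos_nonempty {α : Type*} {S u : List α} (hu : u <:+: S) (hune : u ≠ []) :
    ∃ j, j ∈ endPos S u := by
  obtain ⟨p, s, hps⟩ := hu
  have hul : 1 ≤ u.length := List.length_pos_iff.mpr hune
  refine ⟨p.length + u.length - 1, ?_, ?_⟩
  · have := congrArg List.length hps
    simp at this
    omega
  · have hj1 : p.length + u.length - 1 + 1 = (p ++ u).length := by simp; omega
    rw [hj1]
    have : S.take (p ++ u).length = p ++ u := by
      rw [← hps]
      exact List.take_left
    rw [this]
    exact List.suffix_append _ _

lemma mem_endPos_infix {α : Type*} {S u : List α} {j : ℕ} (h : j ∈ endPos S u) :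
    u <:+: S :=
  h.2.isInfix.trans (List.take_prefix _ _).isInfix

/-- Every DAWG state `[u]` with `u ≠ ε` has exactly one incoming primary edge:
exactly one pair `([w], a)` (with the state `[w]` represented by its longest member)
such that `w · a ∈ [u]` and `|longest([w])| + 1 = |longest([u])|`. -/
theorem stmt15 {α : Type*} (S u lu : List α)
    (hu : u <:+: S) (hune : u ≠ [])
    (hlu1 : lu <:+: S) (hlu2 : lu ≠ []) (hlu3 : endPos S lu = endPos S u)
    (hlu4 : ∀ v, v <:+: S → v ≠ [] → endPos S v = endPos S u → v.length ≤ lu.length) :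
    ∃! e : List α × α, IsLongestRep S e.1 ∧ (e.1 ++ [e.2]) <:+: S ∧
      endPos S (e.1 ++ [e.2]) = endPos S u ∧ e.1.length + 1 = lu.length := by
  set w := lu.dropLast with hw
  set a := lu.getLast hlu2 with ha
  have hwa : w ++ [a] = lu := List.dropLast_append_getLast hlu2
  have hlen : w.length + 1 = lu.length := by
    rw [← hwa]; simp
  obtain ⟨j0, hj0⟩ := endPos_nonempty hu hune
  refine ⟨(w, a), ⟨?_, ?_, ?_, hlen⟩, ?_⟩
  · -- IsLongestRep
    show IsLongestRep S w
    by_cases hwe : w = []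
    · exact Or.inl hwe
    · refine Or.inr ⟨(lu.dropLast_prefix.isInfix).trans hlu1, hwe, ?_⟩
      intro v hv hvne hvcls
      have h1 : endPos S (v ++ [a]) = endPos S (w ++ [a]) :=
        endPos_snoc a hvne hwe hvcls
      have h2 : endPos S (v ++ [a]) = endPos S u := by
        rw [h1, hwa, hlu3]
      have hj0' : j0 ∈ endPos S (v ++ [a]) := by rw [h2]; exact hj0
      have hinf : (v ++ [a]) <:+: S := mem_endPos_infix hj0'
      have := hlu4 (v ++ [a]) hinf (by simp) h2
      simp at this
      omega
  · rw [hwa]; exact hlu1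
  · rw [hwa]; exact hlu3
  · rintro ⟨w', a'⟩ ⟨-, -, hcls', hlen'⟩
    simp only at hcls' hlen' ⊢
    have hj1 : j0 ∈ endPos S (w' ++ [a']) := by rw [hcls']; exact hj0
    have hj2 : j0 ∈ endPos S lu := by rw [hlu3]; exact hj0
    have heq : w' ++ [a'] = lu := by
      rcases List.suffix_or_suffix_of_suffix hj1.2 hj2.2 with h | h
      · exact h.eq_of_length (by simp; omega)
      · exact (h.eq_of_length (by simp; omega)).symm
    rw [← hwa] at heq
    obtain ⟨h1, h2⟩ := List.append_inj' heq rfl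
    simp at h2
    exact Prod.ext h1 h2
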